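/- arXiv:1209.2010 — 3 statements merged into one kernel-verified Lean document; each statement's English description precedes it below -/
import Mathlib

section
/- Let X be a complete metric space and R ⊆ C([0,∞); X) satisfy (K1)–(K4), where (K3) is the concatenation property and (K4) is: for any sequence φⁿ ∈ R with φⁿ(0) → φ₀ in X, there exist a subsequence φⁿᵏ and φ ∈ R with φⁿᵏ(t) → φ(t) for every t ≥ 0. If z ∈ X satisfies z ∈ G(t,z) for all t ≥ 0, then z is a fixed point of R, i.e., the constant function φ(t) ≡ z belongs to R. -/
open Set Filter Topology
open scoped NNReal

private lemma concat_aux {X : Type*} [MetricSpace X]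
    (R : Set C(ℝ≥0, X))
    (hK3 : ∀ φ₁ ∈ R, ∀ φ₂ ∈ R, ∀ s : ℝ≥0, 0 < s → φ₂ 0 = φ₁ s →
      ∃ φ ∈ R, (∀ t : ℝ≥0, t ≤ s → φ t = φ₁ t) ∧ (∀ t : ℝ≥0, φ (s + t) = φ₂ t))
    (z : X) (s : ℝ≥0) (hs : 0 < s)
    (hzs : ∃ φ ∈ R, φ 0 = z ∧ φ s = z) :
    ∀ m : ℕ, ∃ φ ∈ R, φ 0 = z ∧ ∀ k : ℕ, k ≤ m → φ ((k : ℝ≥0) * s) = z := by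
  intro m
  induction m with
  | zero =>
    obtain ⟨φ, hφR, hφ0, _⟩ := hzs
    refine ⟨φ, hφR, hφ0, fun k hk => ?_⟩
    interval_cases k
    simpa using hφ0
  | succ m ih =>
    rcases Nat.eq_zero_or_pos m with hm | hm
    · subst hm
      obtain ⟨φ, hφR, hφ0, hφs⟩ := hzs
      refine ⟨φ, hφR, hφ0, fun k hk => ?_⟩
      interval_cases k
      · simpa using hφ0
      · simpa using hφs
    · obtain ⟨φ₁, hφ₁R, hφ₁0, hφ₁⟩ := ih
      obtain ⟨φ₂, hφ₂R, hφ₂0, hφ₂s⟩ := hzs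
      have hms : (0 : ℝ≥0) < (m : ℝ≥0) * s :=
        mul_pos (by exact_mod_cast hm) hs
      have h0 : φ₂ 0 = φ₁ ((m : ℝ≥0) * s) := by
        rw [hφ₂0, hφ₁ m le_rfl]
      obtain ⟨φ, hφR, hle, hshift⟩ := hK3 φ₁ hφ₁R φ₂ hφ₂R ((m : ℝ≥0) * s) hms h0
      refine ⟨φ, hφR, ?_, fun k hk => ?_⟩
      · rw [hle 0 zero_le, hφ₁0]
      · rcases Nat.lt_or_ge k (m + 1) with h | h
        · have hk' : k ≤ m := Nat.lt_succ_iff.mp h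
          have hle' : (k : ℝ≥0) * s ≤ (m : ℝ≥0) * s :=
            mul_le_mul_left (by exact_mod_cast hk') s
          rw [hle _ hle', hφ₁ k hk']
        · have hk' : k = m + 1 := le_antisymm hk h
          subst hk'
          have hcast : ((m + 1 : ℕ) : ℝ≥0) * s = (m : ℝ≥0) * s + s := by
            push_cast; ring
          rw [hcast, hshift s, hφ₂s]

/-- Under (K1)–(K4), if `z ∈ G(t,z)` for all `t ≥ 0`, then `z` is a fixed
point of `R`, i.e. the constant trajectory at `z` belongs to `R`. -/
theorem fixed_point_of_rest_point
    {X : Type*} [MetricSpace X] [CompleteSpace X]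
    (R : Set C(ℝ≥0, X))
    (hK1 : ∀ x : X, ∃ φ ∈ R, φ 0 = x)
    (hK2 : ∀ φ ∈ R, ∀ τ : ℝ≥0, ∃ ψ ∈ R, ∀ t : ℝ≥0, ψ t = φ (t + τ))
    (hK3 : ∀ φ₁ ∈ R, ∀ φ₂ ∈ R, ∀ s : ℝ≥0, 0 < s → φ₂ 0 = φ₁ s →
      ∃ φ ∈ R, (∀ t : ℝ≥0, t ≤ s → φ t = φ₁ t) ∧ (∀ t : ℝ≥0, φ (s + t) = φ₂ t))
    (hK4 : ∀ φ : ℕ → C(ℝ≥0, X), (∀ n, φ n ∈ R) →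
      ∀ x₀ : X, Tendsto (fun n => φ n 0) atTop (𝓝 x₀) →
      ∃ σ : ℕ → ℕ, StrictMono σ ∧ ∃ ψ ∈ R,
        ∀ t : ℝ≥0, Tendsto (fun k => φ (σ k) t) atTop (𝓝 (ψ t)))
    (G : ℝ≥0 → X → Set X)
    (hG : ∀ t x, G t x = {y | ∃ φ ∈ R, φ 0 = x ∧ φ t = y})
    (z : X)
    (hz : ∀ t : ℝ≥0, z ∈ G t z) :
    ∃ φ ∈ R, ∀ t : ℝ≥0, φ t = z := by
  have hzG : ∀ t : ℝ≥0, ∃ φ ∈ R, φ 0 = z ∧ φ t = z := by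
    intro t
    have h := hz t
    rw [hG] at h
    exact h
  -- trajectories equal to z at dyadic multiples of 2⁻ⁿ up to n
  have key : ∀ n : ℕ, ∃ φ ∈ R, φ 0 = z ∧
      ∀ k : ℕ, k ≤ n * 2 ^ n → φ ((k : ℝ≥0) * ((2 : ℝ≥0) ^ n)⁻¹) = z := by
    intro n
    have hs : (0 : ℝ≥0) < ((2 : ℝ≥0) ^ n)⁻¹ := by positivity
    exact concat_aux R hK3 z _ hs (hzG _) _
  choose φ hφR hφ0 hφk using key
  obtain ⟨σ, hσ, ψ, hψR, hψt⟩ := hK4 φ hφR z (by simp only [hφ0]; exact tendsto_const_nhds)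
  -- ψ equals z at dyadic points
  have hdya : ∀ i j : ℕ, ψ ((j : ℝ≥0) / 2 ^ i) = z := by
    intro i j
    have hev : ∀ᶠ k in atTop, φ (σ k) ((j : ℝ≥0) / 2 ^ i) = z := by
      filter_upwards [eventually_ge_atTop (max i j)] with k hk
      set n := σ k with hn
      have hkn : max i j ≤ n := hk.trans hσ.le_apply
      have hi : i ≤ n := le_trans (le_max_left _ _) hkn
      have hj : j ≤ n := le_trans (le_max_right _ _) hkn
      have hkle : j * 2 ^ (n - i) ≤ n * 2 ^ n :=
        le_trans (Nat.mul_le_mul_right _ hj)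
          (Nat.mul_le_mul_left _ (Nat.pow_le_pow_right (by norm_num) (Nat.sub_le _ _)))
      have hval := hφk n (j * 2 ^ (n - i)) hkle
      have h2n : (2 : ℝ≥0) ^ (n - i) * 2 ^ i = 2 ^ n := by
        rw [← pow_add, Nat.sub_add_cancel hi]
      have heq : ((j * 2 ^ (n - i) : ℕ) : ℝ≥0) * ((2 : ℝ≥0) ^ n)⁻¹
          = (j : ℝ≥0) / 2 ^ i := by
        push_cast
        rw [mul_comm ((j : ℝ≥0) * 2 ^ (n - i)) _, ← div_eq_inv_mul]
        rw [div_eq_div_iff (by positivity) (by positivity)]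
        rw [mul_assoc, h2n]
      rw [heq] at hval
      exact hval
    have h1 := hψt ((j : ℝ≥0) / 2 ^ i)
    have h2 : Tendsto (fun k => φ (σ k) ((j : ℝ≥0) / 2 ^ i)) atTop (𝓝 z) :=
      Tendsto.congr' (hev.mono fun k hk => hk.symm) tendsto_const_nhds
    exact tendsto_nhds_unique h1 h2
  refine ⟨ψ, hψR, fun t => ?_⟩
  -- dyadic approximations of t
  set d : ℕ → ℝ≥0 := fun i => ((⌊(t : ℝ) * 2 ^ i⌋₊ : ℕ) : ℝ≥0) / 2 ^ i with hd
  have hdz : ∀ i, ψ (d i) = z := fun i => hdya i _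
  have hdt : Tendsto d atTop (𝓝 t) := by
    rw [← NNReal.tendsto_coe]
    rw [tendsto_iff_dist_tendsto_zero]
    have hb : ∀ i : ℕ, dist ((d i : ℝ)) (t : ℝ) ≤ (2 : ℝ)⁻¹ ^ i := by
      intro i
      have hx : (0 : ℝ) ≤ (t : ℝ) * 2 ^ i := by positivity
      have hfl : ((⌊(t : ℝ) * 2 ^ i⌋₊ : ℕ) : ℝ) ≤ (t : ℝ) * 2 ^ i := Nat.floor_le hx
      have hfl2 : (t : ℝ) * 2 ^ i < (⌊(t : ℝ) * 2 ^ i⌋₊ : ℕ) + 1 := Nat.lt_floor_add_one _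
      have hdi : (d i : ℝ) = ((⌊(t : ℝ) * 2 ^ i⌋₊ : ℕ) : ℝ) / 2 ^ i := by
        simp [hd, NNReal.coe_div]
      rw [Real.dist_eq, hdi, abs_sub_comm, abs_of_nonneg]
      · have hpow : (0 : ℝ) < 2 ^ i := by positivity
        have h2i : (2 : ℝ)⁻¹ ^ i * 2 ^ i = 1 := by rw [← mul_pow]; norm_num
        have hdm : ((⌊(t : ℝ) * 2 ^ i⌋₊ : ℕ) : ℝ) / 2 ^ i * 2 ^ i
            = ((⌊(t : ℝ) * 2 ^ i⌋₊ : ℕ) : ℝ) := div_mul_cancel₀ _ hpow.ne'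
        nlinarith [hfl2]
      · have : ((⌊(t : ℝ) * 2 ^ i⌋₊ : ℕ) : ℝ) / 2 ^ i ≤ (t : ℝ) := by
          rw [div_le_iff₀ (by positivity)]
          exact hfl
        linarith
    have h0 : Tendsto (fun i : ℕ => (2 : ℝ)⁻¹ ^ i) atTop (𝓝 0) :=
      tendsto_pow_atTop_nhds_zero_of_lt_one (by norm_num) (by norm_num)
    exact squeeze_zero (fun i => dist_nonneg) hb h0
  have h1 : Tendsto (fun i => ψ (d i)) atTop (𝓝 (ψ t)) :=
    (ψ.continuous.tendsto t).comp hdt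
  have h2 : Tendsto (fun i => ψ (d i)) atTop (𝓝 z) := by
    simp only [hdz]; exact tendsto_const_nhds
  exact tendsto_nhds_unique h1 h2
end

section
/- Let X be a complete metric space and R ⊆ C([0,∞); X) satisfy (K1)–(K4). Then a map γ : ℝ → X is a complete trajectory of R (meaning γ(·+h) restricted to [0,∞) belongs to R for every h ∈ ℝ) if and only if γ(t+s) ∈ G(t, γ(s)) for all s ∈ ℝ and t ≥ 0, where G(t,x) = {φ(t) : φ ∈ R, φ(0) = x}. -/
open Set Filter Topology
open scoped NNReal

/-- Under (K1)–(K4), a map `γ : ℝ → X` is a complete trajectory of `R`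
(every forward shift `γ(·+h)|_[0,∞)` belongs to `R`) if and only if
`γ(t+s) ∈ G(t, γ(s))` for all `s ∈ ℝ` and `t ≥ 0`. -/
theorem complete_trajectory_iff
    {X : Type*} [MetricSpace X] [CompleteSpace X]
    (R : Set C(ℝ≥0, X))
    (hK1 : ∀ x : X, ∃ φ ∈ R, φ 0 = x)
    (hK2 : ∀ φ ∈ R, ∀ τ : ℝ≥0, ∃ ψ ∈ R, ∀ t : ℝ≥0, ψ t = φ (t + τ))
    (hK3 : ∀ φ₁ ∈ R, ∀ φ₂ ∈ R, ∀ s : ℝ≥0, 0 < s → φ₂ 0 = φ₁ s →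
      ∃ φ ∈ R, (∀ t : ℝ≥0, t ≤ s → φ t = φ₁ t) ∧ (∀ t : ℝ≥0, φ (s + t) = φ₂ t))
    (hK4 : ∀ φ : ℕ → C(ℝ≥0, X), (∀ n, φ n ∈ R) →
      ∀ x₀ : X, Tendsto (fun n => φ n 0) atTop (𝓝 x₀) →
      ∃ σ : ℕ → ℕ, StrictMono σ ∧ ∃ ψ ∈ R,
        ∀ t : ℝ≥0, Tendsto (fun k => φ (σ k) t) atTop (𝓝 (ψ t)))
    (G : ℝ≥0 → X → Set X)
    (hG : ∀ t x, G t x = {y | ∃ φ ∈ R, φ 0 = x ∧ φ t = y})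
    (γ : ℝ → X) :
    (∀ h : ℝ, ∃ φ ∈ R, ∀ t : ℝ≥0, φ t = γ (↑t + h)) ↔
      (∀ (s : ℝ) (t : ℝ≥0), γ (↑t + s) ∈ G t (γ s)) := by
  constructor
  · intro H s t
    obtain ⟨φ, hφR, hφ⟩ := H s
    rw [hG]
    refine ⟨φ, hφR, ?_, hφ t⟩
    simpa using hφ 0
  · intro hγ h
    classical
    -- a trajectory matching γ(·+h) on any finite set of times
    have key : ∀ S : Finset ℝ≥0, ∃ φ ∈ R, φ 0 = γ h ∧
        ∀ x ∈ S, φ x = γ (↑x + h) := by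
      intro S
      induction S using Finset.induction_on_max with
      | empty =>
        have h0 := hγ h 0
        rw [hG] at h0
        obtain ⟨φ, hφR, hφ0, -⟩ := h0
        exact ⟨φ, hφR, hφ0, by simp⟩
      | insert a S ha IH =>
        obtain ⟨φ₁, hφ₁R, hφ₁0, hφ₁⟩ := IH
        have hgen : ∃ φ₂ ∈ R, φ₂ 0 = γ h ∧ φ₂ a = γ (↑a + h) := by
          have h0 := hγ h a
          rw [hG] at h0
          exact h0
        rcases S.eq_empty_or_nonempty with rfl | hS
        · obtain ⟨φ₂, hφ₂R, h20, h2a⟩ := hgen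
          exact ⟨φ₂, hφ₂R, h20, by intro x hx; simp only [Finset.mem_insert,
            Finset.notMem_empty, or_false] at hx; subst hx; exact h2a⟩
        · set m := S.max' hS with hm
          by_cases hm0 : m = 0
          · obtain ⟨φ₂, hφ₂R, h20, h2a⟩ := hgen
            refine ⟨φ₂, hφ₂R, h20, ?_⟩
            intro x hx
            rcases Finset.mem_insert.mp hx with rfl | hx
            · exact h2a
            · have : x = 0 := le_antisymm (hm0 ▸ S.le_max' x hx) zero_le
              subst this
              simpa using h20
          · have hmpos : 0 < m := zero_lt_iff.mpr hm0
            have hmS : m ∈ S := S.max'_mem hS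
            have hma : m ≤ a := (ha m hmS).le
            have h0 := hγ (↑m + h) (a - m)
            rw [hG] at h0
            obtain ⟨φ₂, hφ₂R, h20, h2t⟩ := h0
            have hglue : φ₂ 0 = φ₁ m := by rw [h20, hφ₁ m hmS]
            obtain ⟨φ, hφR, hle, hcat⟩ := hK3 φ₁ hφ₁R φ₂ hφ₂R m hmpos hglue
            refine ⟨φ, hφR, by rw [hle 0 zero_le, hφ₁0], ?_⟩
            intro x hx
            rcases Finset.mem_insert.mp hx with rfl | hx
            · have hxa : m + (x - m) = x := add_tsub_cancel_of_le hma
              rw [← hxa, hcat, h2t]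
              congr 1
              push_cast [NNReal.coe_sub hma]
              ring
            · rw [hle x (S.le_max' x hx), hφ₁ x hx]
    -- countable dense sequence in ℝ≥0
    obtain ⟨D, hDc, hDd⟩ := TopologicalSpace.exists_countable_dense ℝ≥0
    obtain ⟨d, hd⟩ := Set.Countable.exists_eq_range hDc hDd.nonempty
    -- for every t₀ there is a trajectory matching γ(·+h) at t₀ and all d k
    have main : ∀ t₀ : ℝ≥0, ∃ ψ ∈ R, ψ t₀ = γ (↑t₀ + h) ∧
        ∀ k, ψ (d k) = γ (↑(d k) + h) := by
      intro t₀
      choose φ hφR hφ0 hφ using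
        fun n : ℕ => key (insert t₀ ((Finset.range n).image d))
      obtain ⟨σ, hσ, ψ, hψR, hψ⟩ := hK4 φ hφR (γ h)
        (by simpa [hφ0] using (tendsto_const_nhds : Tendsto (fun _ : ℕ => γ h) atTop _))
      have hval : ∀ n t, t ∈ (insert t₀ ((Finset.range (σ n)).image d) : Finset ℝ≥0) →
          φ (σ n) t = γ (↑t + h) := fun n t ht => hφ (σ n) t ht
      refine ⟨ψ, hψR, ?_, ?_⟩
      · refine tendsto_nhds_unique (hψ t₀) ?_
        have : (fun n => φ (σ n) t₀) = fun _ => γ (↑t₀ + h) := by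
          funext n; exact hval n t₀ (Finset.mem_insert_self _ _)
        rw [this]; exact tendsto_const_nhds
      · intro k
        refine tendsto_nhds_unique (hψ (d k)) ?_
        refine Tendsto.congr' ?_ (tendsto_const_nhds : Tendsto (fun _ : ℕ => γ (↑(d k) + h)) atTop _)
        filter_upwards [eventually_ge_atTop (k + 1)] with n hn
        refine (hval n (d k) ?_).symm
        refine Finset.mem_insert_of_mem (Finset.mem_image_of_mem d ?_)
        exact Finset.mem_range.mpr (lt_of_lt_of_le (Nat.lt_succ_self k |>.trans_le hn) (hσ.le_apply))
    obtain ⟨ψ₀, hψ₀R, -, hψ₀⟩ := main 0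
    refine ⟨ψ₀, hψ₀R, fun t => ?_⟩
    obtain ⟨ψt, hψtR, htval, hψt⟩ := main t
    have heq : (ψ₀ : ℝ≥0 → X) = ψt := by
      refine Continuous.ext_on (hd ▸ hDd : Dense (Set.range d)) ψ₀.continuous ψt.continuous ?_
      rintro x ⟨k, rfl⟩
      rw [hψ₀ k, hψt k]
    calc ψ₀ t = ψt t := by rw [heq]
      _ = γ (↑t + h) := htval
end

section
/- Let G be a strict multivalued semiflow on a complete metric space X with a compact global attractor Θ (negatively semi-invariant and attracting all bounded sets). Then Θ is strictly invariant: G(t,Θ) = Θ for all t ≥ 0. -/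
open Set Filter Topology Bornology
open scoped NNReal

/-- A compact global attractor of a strict multivalued semiflow is
strictly invariant: `G(t,Θ) = Θ` for all `t ≥ 0`. -/
theorem attractor_strictly_invariant
    {X : Type*} [MetricSpace X] [CompleteSpace X]
    (G : ℝ≥0 → X → Set X)
    (hG0 : ∀ x : X, G 0 x = {x})
    (hstrict : ∀ t s : ℝ≥0, ∀ x : X, G (t + s) x = ⋃ y ∈ G s x, G t y)
    (Θ : Set X) (hcomp : IsCompact Θ)
    (hneg : ∀ t : ℝ≥0, Θ ⊆ ⋃ x ∈ Θ, G t x)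
    (hattr : ∀ B : Set X, IsBounded B → ∀ ε > (0 : ℝ), ∃ T : ℝ≥0,
      ∀ t ≥ T, ∀ x ∈ B, ∀ y ∈ G t x, Metric.infDist y Θ < ε) :
    ∀ t : ℝ≥0, (⋃ x ∈ Θ, G t x) = Θ := by
  intro t
  apply Subset.antisymm _ (hneg t)
  intro y hy
  rw [mem_iUnion₂] at hy
  obtain ⟨x, hx, hyx⟩ := hy
  have hne : Θ.Nonempty := ⟨x, hx⟩
  have hzero : Metric.infDist y Θ ≤ 0 := by
    refine le_of_forall_pos_le_add fun ε hε => ?_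
    obtain ⟨T, hT⟩ := hattr Θ hcomp.isBounded ε hε
    obtain ⟨x', hx', hxx'⟩ := mem_iUnion₂.mp (hneg T hx)
    have hy' : y ∈ G (t + T) x' := by
      rw [hstrict t T x', mem_iUnion₂]
      exact ⟨x, hxx', hyx⟩
    have := hT (t + T) (le_add_self) x' hx' y hy'
    linarith
  have := le_antisymm hzero (Metric.infDist_nonneg)
  exact (hcomp.isClosed.mem_iff_infDist_zero hne).mpr this
end
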